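/- Let G=(V,E) be a finite simple undirected graph and let (S_t) be the volume-biased evolving set process started from a nonempty set S₀ ⊆ V. Define F_t = Π_{j=0}^{t-1} (1 − ψ(S_j))^{-1} (with F₀ = 1) and M_t = F_t · √(μ(S₀)/μ(S_t)). Then (M_t)_{t≥0} is a martingale with respect to the natural filtration of the volume-biased evolving set process. -/

import Mathlib

open scoped Classical symmDiff

noncomputable section

variable {V : Type*} [Fintype V] [DecidableEq V]

/-- The volume `μ(S)` of a set of vertices: the sum of the degrees. -/
def vol (G : SimpleGraph V) [DecidableRel G.Adj] (S : Finset V) : ℝ :=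
  ∑ x ∈ S, (G.degree x : ℝ)

/-- The number of edges leaving `S`, i.e. `∂(S) = e(S, Sᶜ)`. -/
def bdry (G : SimpleGraph V) [DecidableRel G.Adj] (S : Finset V) : ℝ :=
  ∑ x ∈ S, ((Sᶜ.filter (G.Adj x)).card : ℝ)

/-- The conductance `φ(S) = ∂(S)/μ(S)`. -/
def phiCond (G : SimpleGraph V) [DecidableRel G.Adj] (S : Finset V) : ℝ :=
  bdry G S / vol G S

/-- The lazy random walk kernel `p(x,y)`: `1/2` if `x = y`, `1/(2 d(x))` if `x ~ y`,
and `0` otherwise. -/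
def walkP (G : SimpleGraph V) [DecidableRel G.Adj] (x y : V) : ℝ :=
  if x = y then 1/2 else if G.Adj x y then 1 / (2 * (G.degree x : ℝ)) else 0

/-- `p(x,S) = Σ_{y∈S} p(x,y)`. -/
def pset (G : SimpleGraph V) [DecidableRel G.Adj] (x : V) (S : Finset V) : ℝ :=
  ∑ y ∈ S, walkP G x y

/-- One step of the evolving set process from `S` with threshold `u`:
`S₁ = {y : p(y,S) ≥ u}`. -/
def esStep (G : SimpleGraph V) [DecidableRel G.Adj] (S : Finset V) (u : ℝ) : Finset V :=
  Finset.univ.filter fun y => u ≤ pset G y S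

/-- The ESP transition kernel `K(S,S')`: the probability, for a uniform threshold
`U ∈ [0,1]`, that `{y : p(y,S) ≥ U} = S'`. -/
def Kk (G : SimpleGraph V) [DecidableRel G.Adj] (S S' : Finset V) : ℝ :=
  (MeasureTheory.volume {u : ℝ | u ∈ Set.Icc (0:ℝ) 1 ∧ esStep G S u = S'}).toReal

/-- The volume-biased ESP transition kernel `K̂(S,S') = (μ(S')/μ(S)) K(S,S')`. -/
def Khat (G : SimpleGraph V) [DecidableRel G.Adj] (S S' : Finset V) : ℝ :=
  vol G S' / vol G S * Kk G S S'

/-- The growth gauge `ψ(S)`, defined by `1 - ψ(S) = E_S[√(μ(S₁)/μ(S))]` where the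
expectation is over one step of the evolving set process from `S`. -/
def psi (G : SimpleGraph V) [DecidableRel G.Adj] (S : Finset V) : ℝ :=
  1 - ∑ S' : Finset V, Kk G S S' * Real.sqrt (vol G S' / vol G S)

/-- `F_t = Π_{j=0}^{t-1} (1 − ψ(S_j))⁻¹` along the path `s`. -/
def Fgauge (G : SimpleGraph V) [DecidableRel G.Adj] (s : ℕ → Finset V) (t : ℕ) : ℝ :=
  ∏ j ∈ Finset.range t, (1 - psi G (s j))⁻¹

/-- `M_t = F_t · √(μ(S₀)/μ(S_t))` along the path `s` (here `s 0 = S₀`). -/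
def Mgauge (G : SimpleGraph V) [DecidableRel G.Adj] (s : ℕ → Finset V) (t : ℕ) : ℝ :=
  Fgauge G s t * Real.sqrt (vol G (s 0) / vol G (s t))

lemma vol_nonneg (G : SimpleGraph V) [DecidableRel G.Adj] (S : Finset V) : 0 ≤ vol G S :=
  Finset.sum_nonneg fun _ _ => Nat.cast_nonneg _

lemma walkP_nonneg (G : SimpleGraph V) [DecidableRel G.Adj] (x y : V) : 0 ≤ walkP G x y := by
  unfold walkP; split_ifs <;> positivity

lemma Kk_nonneg (G : SimpleGraph V) [DecidableRel G.Adj] (S S' : Finset V) : 0 ≤ Kk G S S' :=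
  ENNReal.toReal_nonneg

lemma pset_half (G : SimpleGraph V) [DecidableRel G.Adj] {x : V} {S : Finset V} (hx : x ∈ S) :
    (2⁻¹ : ℝ) ≤ pset G x S := by
  have hxx : walkP G x x = 2⁻¹ := by simp [walkP]
  unfold pset
  calc (2⁻¹ : ℝ) = walkP G x x := hxx.symm
    _ ≤ ∑ y ∈ S, walkP G x y :=
        Finset.single_le_sum (fun y _ => walkP_nonneg G x y) hx

lemma Kk_pos (G : SimpleGraph V) [DecidableRel G.Adj] (S : Finset V) :
    0 < Kk G S (esStep G S 2⁻¹) := by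
  classical
  set P : Finset ℝ :=
    insert 0 ((Finset.univ.image fun y => pset G y S).filter fun p => p < 2⁻¹) with hP
  have hPne : P.Nonempty := ⟨0, Finset.mem_insert_self _ _⟩
  set cmax := P.max' hPne with hcm
  have hc0 : (0:ℝ) ≤ cmax := Finset.le_max' _ _ (Finset.mem_insert_self _ _)
  have hclt : cmax < 2⁻¹ := by
    rw [hcm, Finset.max'_lt_iff]
    intro b hb
    rcases Finset.mem_insert.1 hb with h | h
    · rw [h]; norm_num
    · exact (Finset.mem_filter.1 h).2
  have hub : ∀ y : V, pset G y S < 2⁻¹ → pset G y S ≤ cmax := by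
    intro y hy
    apply Finset.le_max'
    apply Finset.mem_insert_of_mem
    refine Finset.mem_filter.2 ⟨Finset.mem_image_of_mem (fun y => pset G y S) (Finset.mem_univ y), ?_⟩
    exact hy
  have hsub : Set.Ioc cmax 2⁻¹ ⊆
      {u : ℝ | u ∈ Set.Icc (0:ℝ) 1 ∧ esStep G S u = esStep G S 2⁻¹} := by
    rintro u ⟨hu1, hu2⟩
    refine ⟨⟨(lt_of_le_of_lt hc0 hu1).le, hu2.trans (by norm_num)⟩, ?_⟩
    ext y
    simp only [esStep, Finset.mem_filter, Finset.mem_univ, true_and]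
    constructor
    · intro h
      by_contra hlt
      push_neg at hlt
      exact absurd h (not_le.2 (lt_of_le_of_lt (hub y hlt) hu1))
    · intro h; exact hu2.trans h
  have h1 : MeasureTheory.volume (Set.Ioc cmax 2⁻¹) ≤
      MeasureTheory.volume {u : ℝ | u ∈ Set.Icc (0:ℝ) 1 ∧ esStep G S u = esStep G S 2⁻¹} :=
    MeasureTheory.measure_mono hsub
  unfold Kk
  apply ENNReal.toReal_pos
  · intro h0
    rw [h0] at h1
    rw [Real.volume_Ioc, nonpos_iff_eq_zero, ENNReal.ofReal_eq_zero] at h1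
    linarith
  · refine ne_top_of_le_ne_top ?_ (MeasureTheory.measure_mono fun u hu => hu.1)
    simp [Real.volume_Icc]

lemma A_pos (G : SimpleGraph V) [DecidableRel G.Adj] {S : Finset V} (hS : 0 < vol G S) :
    0 < ∑ S' : Finset V, Kk G S S' * Real.sqrt (vol G S') := by
  have hsubset : S ⊆ esStep G S 2⁻¹ := by
    intro x hx
    simp only [esStep, Finset.mem_filter, Finset.mem_univ, true_and]
    exact pset_half G hx
  have hvolT : 0 < vol G (esStep G S 2⁻¹) :=
    lt_of_lt_of_le hS (Finset.sum_le_sum_of_subset_of_nonneg hsubset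
      fun _ _ _ => Nat.cast_nonneg _)
  have hterm : 0 < Kk G S (esStep G S 2⁻¹) * Real.sqrt (vol G (esStep G S 2⁻¹)) :=
    mul_pos (Kk_pos G S) (Real.sqrt_pos.2 hvolT)
  refine lt_of_lt_of_le hterm (Finset.single_le_sum
    (f := fun S' => Kk G S S' * Real.sqrt (vol G S')) ?_ (Finset.mem_univ _))
  exact fun S' _ => mul_nonneg (Kk_nonneg G S S') (Real.sqrt_nonneg _)

lemma step_lemma (G : SimpleGraph V) [DecidableRel G.Adj] (v0 : ℝ) (hv0 : 0 ≤ v0)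
    (S : Finset V) (hS : 0 < vol G S) (c : ℝ) :
    ∑ S' : Finset V, Khat G S S' * (c * (1 - psi G S)⁻¹ * Real.sqrt (v0 / vol G S'))
      = c * Real.sqrt (v0 / vol G S) := by
  set A := ∑ S' : Finset V, Kk G S S' * Real.sqrt (vol G S') with hA
  have hApos : 0 < A := A_pos G hS
  have hpsi : 1 - psi G S = A / Real.sqrt (vol G S) := by
    unfold psi
    rw [sub_sub_cancel, hA, Finset.sum_div]
    refine Finset.sum_congr rfl fun S' _ => ?_
    rw [Real.sqrt_div (vol_nonneg G S'), mul_div_assoc]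
  have hsS : (0:ℝ) < Real.sqrt (vol G S) := Real.sqrt_pos.2 hS
  have hvolS : vol G S = Real.sqrt (vol G S) ^ 2 := (Real.sq_sqrt hS.le).symm
  have hterm : ∀ S' : Finset V,
      Khat G S S' * (c * (1 - psi G S)⁻¹ * Real.sqrt (v0 / vol G S')) =
      (c * Real.sqrt (vol G S) * Real.sqrt v0 / (A * vol G S)) *
        (Kk G S S' * Real.sqrt (vol G S')) := by
    intro S'
    rw [hpsi, Real.sqrt_div hv0]
    unfold Khat
    by_cases h : vol G S' = 0
    · simp [h]
    · have ha : 0 < vol G S' := lt_of_le_of_ne (vol_nonneg G S') (Ne.symm h)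
      have hsa : (0:ℝ) < Real.sqrt (vol G S') := Real.sqrt_pos.2 ha
      have hva : vol G S' = Real.sqrt (vol G S') ^ 2 := (Real.sq_sqrt ha.le).symm
      field_simp
      linear_combination
        (-(Kk G S S' * c * Real.sqrt v0)) *
          Real.mul_self_sqrt ha.le
  rw [Finset.sum_congr rfl fun S' _ => hterm S', ← Finset.mul_sum, ← hA,
    Real.sqrt_div hv0]
  field_simp
  linear_combination (c * Real.sqrt v0) * Real.mul_self_sqrt hS.le

/-- `(M_t)` with `M_t = F_t √(μ(S₀)/μ(S_t))`, `F_t = Π_{j<t} (1 − ψ(S_j))⁻¹`, is a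
martingale for the volume-biased evolving set process started from a nonempty `S₀`,
with respect to the natural filtration: conditioned on any history `(s 0, …, s t)` of
positive probability starting at `S₀`, the expected value of `M_{t+1}` equals `M_t`. -/
theorem statement7 (G : SimpleGraph V) [DecidableRel G.Adj]
    (S₀ : Finset V) (hS₀ : S₀.Nonempty) :
    ∀ (t : ℕ) (s : ℕ → Finset V), s 0 = S₀ →
      0 < ∏ j ∈ Finset.range t, Khat G (s j) (s (j+1)) →
      ∑ S' : Finset V, Khat G (s t) S' * Mgauge G (Function.update s (t+1) S') (t+1) =
        Mgauge G s t := by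
  intro t s hs0eq hpos
  by_cases hv : vol G (s t) = 0
  · cases t with
    | zero =>
      have hK : ∀ S' : Finset V, Khat G (s 0) S' = 0 := by
        intro S'; simp [Khat, hv]
      simp [hK, Mgauge, Fgauge, hv]
    | succ k =>
      exfalso
      have h0 : Khat G (s k) (s (k+1)) = 0 := by simp [Khat, hv]
      have := Finset.prod_eq_zero (f := fun j => Khat G (s j) (s (j+1))) (Finset.mem_range.2 (Nat.lt_succ_self k)) h0
      rw [this] at hpos
      exact lt_irrefl 0 hpos
  · have hvpos : 0 < vol G (s t) := lt_of_le_of_ne (vol_nonneg G (s t)) (Ne.symm hv)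
    have hMeq : ∀ S' : Finset V, Mgauge G (Function.update s (t+1) S') (t+1) =
        Fgauge G s t * (1 - psi G (s t))⁻¹ * Real.sqrt (vol G (s 0) / vol G S') := by
      intro S'
      unfold Mgauge
      have h0 : Function.update s (t+1) S' 0 = s 0 := Function.update_of_ne (by omega) _ _
      have ht1 : Function.update s (t+1) S' (t+1) = S' := Function.update_self _ _ _
      rw [h0, ht1]
      congr 1
      unfold Fgauge
      rw [Finset.prod_range_succ]
      congr 1
      · refine Finset.prod_congr rfl fun j hj => ?_
        have : j ≠ t + 1 := by simp only [Finset.mem_range] at hj; omega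
        rw [Function.update_of_ne this]
      · rw [Function.update_of_ne (by omega)]
    rw [Finset.sum_congr rfl fun S' _ => by rw [hMeq S']]
    rw [step_lemma G (vol G (s 0)) (vol_nonneg G (s 0)) (s t) hvpos (Fgauge G s t)]
    rfl
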